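/- At τ = i, the Jacobi theta functions satisfy θ₃(1) = 2^{1/4} · θ₄(1); that is, ∑_{n ∈ ℤ} e^{-π n²} = 2^{1/4} · ∑_{n ∈ ℤ} (-1)^n e^{-π n²}. -/

import Mathlib

open Real

section ThetaAux

/-- Summability of shifted Gaussian sums over `ℤ`. -/
private lemma summable_exp_quad {c : ℝ} (hc : 0 < c) (t : ℝ) :
    Summable fun n : ℤ => Real.exp (-c * ((n : ℝ) + t) ^ 2) := by
  set u := c / Real.pi with hu
  have hu0 : 0 < u := div_pos hc pi_pos
  have hc' : c = Real.pi * u := by rw [hu]; field_simp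
  refine ((summable_pow_mul_jacobiTheta₂_term_bound (u * |t|) hu0 0).of_norm_bounded
    fun n => ?_)
  rw [Real.norm_eq_abs, Real.abs_exp, pow_zero, one_mul, Real.exp_le_exp, hc']
  push_cast
  have h1 : -(|t| * |(n : ℝ)|) ≤ t * (n : ℝ) := by
    rw [← abs_mul]; exact neg_abs_le _
  nlinarith [pi_pos, sq_nonneg t, mul_pos pi_pos hu0, sq_abs ((n : ℝ)),
    mul_le_mul_of_nonneg_left h1 (mul_pos pi_pos hu0).le]

private lemma abs_negone_zpow (n : ℤ) : |(-1 : ℝ) ^ n| = 1 := by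
  rcases Int.even_or_odd n with h | h
  · rw [h.neg_one_zpow, abs_one]
  · rw [h.neg_one_zpow, abs_neg, abs_one]

private lemma summable_sexp_quad {c : ℝ} (hc : 0 < c) (t : ℝ) :
    Summable fun n : ℤ => ((-1 : ℝ) ^ n * Real.exp (-c * ((n : ℝ) + t) ^ 2)) := by
  refine (summable_exp_quad hc t).of_norm_bounded fun n => ?_
  rw [Real.norm_eq_abs, abs_mul, abs_negone_zpow, one_mul, Real.abs_exp]

/-- Splitting `ℤ` into even and odd integers. -/
private def evenOddEquiv : ℤ ⊕ ℤ ≃ ℤ where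
  toFun := Sum.elim (fun k => 2 * k) (fun k => 2 * k + 1)
  invFun n := if n % 2 = 0 then .inl (n / 2) else .inr (n / 2)
  left_inv x := by
    rcases x with k | k
    · dsimp only [Sum.elim_inl]
      rw [if_pos (by omega)]
      congr 1; omega
    · dsimp only [Sum.elim_inr]
      rw [if_neg (by omega)]
      congr 1; omega
  right_inv n := by
    by_cases h : n % 2 = 0
    · dsimp only
      rw [if_pos h]
      dsimp only [Sum.elim_inl]; omega
    · dsimp only
      rw [if_neg h]
      dsimp only [Sum.elim_inr]; omega

/-- Splitting `ℤ × ℤ` by the parity of the sum of coordinates, with a rotation by 45°. -/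
private def parityEquiv : (ℤ × ℤ) ⊕ (ℤ × ℤ) ≃ ℤ × ℤ where
  toFun := Sum.elim (fun p => (p.1 + p.2, p.1 - p.2)) (fun p => (p.1 + p.2 + 1, p.1 - p.2))
  invFun q := if (q.1 + q.2) % 2 = 0 then .inl ((q.1 + q.2) / 2, (q.1 - q.2) / 2)
    else .inr ((q.1 + q.2 - 1) / 2, (q.1 - q.2 - 1) / 2)
  left_inv x := by
    rcases x with ⟨p, q⟩ | ⟨p, q⟩
    · dsimp only [Sum.elim_inl]
      rw [if_pos (by omega)]
      simp only [Sum.inl.injEq, Prod.mk.injEq]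
      omega
    · dsimp only [Sum.elim_inr]
      rw [if_neg (by omega)]
      simp only [Sum.inr.injEq, Prod.mk.injEq]
      omega
  right_inv q := by
    rcases q with ⟨m, n⟩
    by_cases h : (m + n) % 2 = 0
    · dsimp only
      rw [if_pos h]
      dsimp only [Sum.elim_inl]
      simp only [Prod.mk.injEq]
      omega
    · dsimp only
      rw [if_neg h]
      dsimp only [Sum.elim_inr]
      simp only [Prod.mk.injEq]
      omega

private lemma tsum_sumType {α β : Type*} {f : α ⊕ β → ℝ}
    (h1 : Summable fun a => f (.inl a)) (h2 : Summable fun b => f (.inr b)) :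
    ∑' x, f x = (∑' a, f (.inl a)) + ∑' b, f (.inr b) := by
  refine (HasSum.add_isCompl Set.isCompl_range_inl_range_inr ?_ ?_).tsum_eq
  · exact (Equiv.ofInjective _ Sum.inl_injective).hasSum_iff.mp h1.hasSum
  · exact (Equiv.ofInjective _ Sum.inr_injective).hasSum_iff.mp h2.hasSum

private lemma tsum_prod_mul {f g : ℤ → ℝ} (hf : Summable f) (hg : Summable g) :
    (∑' p : ℤ × ℤ, f p.1 * g p.2) = (∑' m, f m) * ∑' n, g n :=
  (tsum_mul_tsum_of_summable_norm (by simpa using hf.abs) (by simpa using hg.abs)).symm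

/-- The key double-sum manipulation: rotating a product of two sums over `ℤ` by 45°. -/
private lemma key_rotation {f g F G F' G' : ℤ → ℝ}
    (hf : Summable f) (hg : Summable g) (hF : Summable F) (hG : Summable G)
    (hF' : Summable F') (hG' : Summable G')
    (heven : ∀ p q : ℤ, f (p + q) * g (p - q) = F p * G q)
    (hodd : ∀ p q : ℤ, f (p + q + 1) * g (p - q) = F' p * G' q) :
    (∑' m, f m) * (∑' n, g n) = (∑' m, F m) * (∑' n, G n) + (∑' m, F' m) * (∑' n, G' n) := by
  have hFG : Summable fun p : ℤ × ℤ => F p.1 * G p.2 :=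
    summable_mul_of_summable_norm (by simpa using hF.abs) (by simpa using hG.abs)
  have hFG' : Summable fun p : ℤ × ℤ => F' p.1 * G' p.2 :=
    summable_mul_of_summable_norm (by simpa using hF'.abs) (by simpa using hG'.abs)
  have heq1 : ∀ p : ℤ × ℤ, f ((parityEquiv (.inl p)).1) * g ((parityEquiv (.inl p)).2)
      = F p.1 * G p.2 := fun p => by
    simp only [parityEquiv, Equiv.coe_fn_mk, Sum.elim_inl]
    exact heven p.1 p.2
  have heq2 : ∀ p : ℤ × ℤ, f ((parityEquiv (.inr p)).1) * g ((parityEquiv (.inr p)).2)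
      = F' p.1 * G' p.2 := fun p => by
    simp only [parityEquiv, Equiv.coe_fn_mk, Sum.elim_inr]
    exact hodd p.1 p.2
  calc (∑' m, f m) * (∑' n, g n)
      = ∑' z : ℤ × ℤ, f z.1 * g z.2 :=
        tsum_mul_tsum_of_summable_norm (by simpa using hf.abs) (by simpa using hg.abs)
    _ = ∑' s : (ℤ × ℤ) ⊕ (ℤ × ℤ), f ((parityEquiv s).1) * g ((parityEquiv s).2) :=
        (parityEquiv.tsum_eq (fun z : ℤ × ℤ => f z.1 * g z.2)).symm
    _ = (∑' p : ℤ × ℤ, f ((parityEquiv (.inl p)).1) * g ((parityEquiv (.inl p)).2))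
        + ∑' p : ℤ × ℤ, f ((parityEquiv (.inr p)).1) * g ((parityEquiv (.inr p)).2) :=
        tsum_sumType (hFG.congr fun p => (heq1 p).symm) (hFG'.congr fun p => (heq2 p).symm)
    _ = (∑' p : ℤ × ℤ, F p.1 * G p.2) + ∑' p : ℤ × ℤ, F' p.1 * G' p.2 := by
        rw [tsum_congr heq1, tsum_congr heq2]
    _ = (∑' m, F m) * (∑' n, G n) + (∑' m, F' m) * (∑' n, G' n) := by
        rw [tsum_prod_mul hF hG, tsum_prod_mul hF' hG']

private lemma negone_zpow_mul_self (k : ℤ) : (-1 : ℝ) ^ k * (-1 : ℝ) ^ k = 1 := by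
  rw [← mul_zpow]; norm_num

private lemma negone_zpow_add (p q : ℤ) : (-1 : ℝ) ^ (p + q) = (-1) ^ p * (-1) ^ q :=
  zpow_add₀ (by norm_num) _ _

private lemma negone_zpow_neg (q : ℤ) : (-1 : ℝ) ^ (-q) = (-1) ^ q := by
  rw [zpow_neg]
  refine inv_eq_of_mul_eq_one_left ?_
  rw [← mul_zpow]; norm_num

private lemma negone_zpow_sub (p q : ℤ) : (-1 : ℝ) ^ (p - q) = (-1) ^ p * (-1) ^ q := by
  rw [sub_eq_add_neg, negone_zpow_add, negone_zpow_neg]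

private lemma negone_zpow_collapse (p q : ℤ) :
    (-1 : ℝ) ^ (p + q) * (-1 : ℝ) ^ (p - q) = 1 := by
  rw [negone_zpow_add, negone_zpow_sub]
  linear_combination ((-1 : ℝ) ^ q * (-1 : ℝ) ^ q) * negone_zpow_mul_self p
    + negone_zpow_mul_self q

end ThetaAux

/-- At τ = i, the Jacobi theta functions satisfy θ₃(1) = 2^{1/4} · θ₄(1):
∑_{n ∈ ℤ} e^{-π n²} = 2^{1/4} · ∑_{n ∈ ℤ} (-1)^n e^{-π n²}. -/
theorem theta3_eq_rpow_two_quarter_mul_theta4_at_i :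
    (∑' n : ℤ, Real.exp (-π * (n : ℝ)^2)) =
      (2 : ℝ) ^ ((1 : ℝ)/4) * ∑' n : ℤ, (-1 : ℝ) ^ n * Real.exp (-π * (n : ℝ)^2) := by
  set a : ℝ := ∑' n : ℤ, Real.exp (-π * (n : ℝ) ^ 2) with ha
  set b : ℝ := ∑' n : ℤ, (-1 : ℝ) ^ n * Real.exp (-π * (n : ℝ) ^ 2) with hb
  set x : ℝ := ∑' n : ℤ, Real.exp (-(2 * π) * (n : ℝ) ^ 2) with hx
  set c : ℝ := ∑' n : ℤ, Real.exp (-(2 * π) * ((n : ℝ) + 1 / 2) ^ 2) with hcdef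
  set B : ℝ := ∑' n : ℤ, (-1 : ℝ) ^ n * Real.exp (-(2 * π) * (n : ℝ) ^ 2) with hB
  set D : ℝ := ∑' n : ℤ, (-1 : ℝ) ^ n * Real.exp (-(2 * π) * ((n : ℝ) + 1 / 2) ^ 2) with hD
  clear_value a b x c B D
  have h2π : (0 : ℝ) < 2 * π := by positivity
  -- summability
  have sa : Summable fun n : ℤ => Real.exp (-π * (n : ℝ) ^ 2) := by
    simpa using summable_exp_quad pi_pos 0
  have sb : Summable fun n : ℤ => (-1 : ℝ) ^ n * Real.exp (-π * (n : ℝ) ^ 2) := by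
    simpa using summable_sexp_quad pi_pos 0
  have sx : Summable fun n : ℤ => Real.exp (-(2 * π) * (n : ℝ) ^ 2) := by
    simpa using summable_exp_quad h2π 0
  have sc : Summable fun n : ℤ => Real.exp (-(2 * π) * ((n : ℝ) + 1 / 2) ^ 2) :=
    summable_exp_quad h2π (1 / 2)
  have sB : Summable fun n : ℤ => (-1 : ℝ) ^ n * Real.exp (-(2 * π) * (n : ℝ) ^ 2) := by
    simpa using summable_sexp_quad h2π 0
  have sD : Summable fun n : ℤ => (-1 : ℝ) ^ n * Real.exp (-(2 * π) * ((n : ℝ) + 1 / 2) ^ 2) :=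
    summable_sexp_quad h2π (1 / 2)
  -- the pointwise exponential identities
  have hEeven : ∀ p q : ℤ,
      Real.exp (-π * ((p + q : ℤ) : ℝ) ^ 2) * Real.exp (-π * ((p - q : ℤ) : ℝ) ^ 2)
        = Real.exp (-(2 * π) * (p : ℝ) ^ 2) * Real.exp (-(2 * π) * (q : ℝ) ^ 2) := by
    intro p q
    rw [← Real.exp_add, ← Real.exp_add]
    congr 1; push_cast; ring
  have hEodd : ∀ p q : ℤ,
      Real.exp (-π * ((p + q + 1 : ℤ) : ℝ) ^ 2) * Real.exp (-π * ((p - q : ℤ) : ℝ) ^ 2)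
        = Real.exp (-(2 * π) * ((p : ℝ) + 1 / 2) ^ 2)
          * Real.exp (-(2 * π) * ((q : ℝ) + 1 / 2) ^ 2) := by
    intro p q
    rw [← Real.exp_add, ← Real.exp_add]
    congr 1; push_cast; ring
  -- identity (1) : a² = x² + c²
  have h1 : a * a = x * x + c * c := by
    rw [ha, hx, hcdef]
    exact key_rotation sa sa sx sx sc sc (fun p q => hEeven p q) (fun p q => hEodd p q)
  -- identity (2) : b² = x² - c²
  have h2 : b * b = x * x + (-c) * c := by
    rw [hb, hx, hcdef, ← tsum_neg]
    refine key_rotation sb sb sx sx sc.neg sc (fun p q => ?_) (fun p q => ?_)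
    · have hcol := negone_zpow_collapse p q
      linear_combination (Real.exp (-π * ((p + q : ℤ) : ℝ) ^ 2)
        * Real.exp (-π * ((p - q : ℤ) : ℝ) ^ 2)) * hcol + hEeven p q
    · have hstep : (-1 : ℝ) ^ (p + q + 1) = -(-1 : ℝ) ^ (p + q) := by
        rw [zpow_add₀ (by norm_num : (-1 : ℝ) ≠ 0) (p + q) 1, zpow_one]; ring
      rw [hstep]
      have hcol := negone_zpow_collapse p q
      linear_combination (-(Real.exp (-π * ((p + q + 1 : ℤ) : ℝ) ^ 2)
        * Real.exp (-π * ((p - q : ℤ) : ℝ) ^ 2))) * hcol - hEodd p q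
  -- identity (3) : a·b = B² + D²
  have h3 : a * b = B * B + D * D := by
    rw [ha, hb, hB, hD]
    refine key_rotation sa sb sB sB sD sD (fun p q => ?_) (fun p q => ?_)
    · rw [negone_zpow_sub]
      linear_combination ((-1 : ℝ) ^ p * (-1 : ℝ) ^ q) * hEeven p q
    · rw [negone_zpow_sub]
      linear_combination ((-1 : ℝ) ^ p * (-1 : ℝ) ^ q) * hEodd p q
  -- D = 0 by the symmetry n ↦ -1-n
  have hD0 : D = 0 := by
    have hinv : Function.Involutive (fun n : ℤ => -1 - n) := fun n => by ring
    have he := (Function.Involutive.toPerm _ hinv).tsum_eq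
      (fun n : ℤ => (-1 : ℝ) ^ n * Real.exp (-(2 * π) * ((n : ℝ) + 1 / 2) ^ 2))
    have hptw : ∀ n : ℤ, (-1 : ℝ) ^ (-1 - n : ℤ)
        * Real.exp (-(2 * π) * (((-1 - n : ℤ) : ℝ) + 1 / 2) ^ 2)
        = -((-1 : ℝ) ^ n * Real.exp (-(2 * π) * ((n : ℝ) + 1 / 2) ^ 2)) := by
      intro n
      rw [negone_zpow_sub (-1) n, show ((-1 : ℝ) ^ (-1 : ℤ)) = -1 by norm_num,
        show (((-1 - n : ℤ) : ℝ) + 1 / 2) ^ 2 = ((n : ℝ) + 1 / 2) ^ 2 by push_cast; ring]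
      ring
    have : D = -D := by
      conv_lhs => rw [hD, ← he]
      simp only [Function.Involutive.coe_toPerm]
      rw [tsum_congr hptw, tsum_neg, ← hD]
    linarith
  -- the theta split at y = 1/2 and Poisson summation
  have hsplit : (∑' n : ℤ, Real.exp (-π * (1 / 2 : ℝ) * (n : ℝ) ^ 2)) = x + c := by
    rw [← evenOddEquiv.tsum_eq (fun n : ℤ => Real.exp (-π * (1 / 2 : ℝ) * (n : ℝ) ^ 2))]
    have heq1 : ∀ k : ℤ, Real.exp (-π * (1 / 2 : ℝ) * ((evenOddEquiv (.inl k) : ℤ) : ℝ) ^ 2)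
        = Real.exp (-(2 * π) * (k : ℝ) ^ 2) := fun k => by
      simp only [evenOddEquiv, Equiv.coe_fn_mk, Sum.elim_inl]
      congr 1; push_cast; ring
    have heq2 : ∀ k : ℤ, Real.exp (-π * (1 / 2 : ℝ) * ((evenOddEquiv (.inr k) : ℤ) : ℝ) ^ 2)
        = Real.exp (-(2 * π) * ((k : ℝ) + 1 / 2) ^ 2) := fun k => by
      simp only [evenOddEquiv, Equiv.coe_fn_mk, Sum.elim_inr]
      congr 1; push_cast; ring
    rw [tsum_sumType (sx.congr fun k => (heq1 k).symm) (sc.congr fun k => (heq2 k).symm)]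
    rw [tsum_congr heq1, tsum_congr heq2, hx, hcdef]
  have hpoisson : (∑' n : ℤ, Real.exp (-π * (1 / 2 : ℝ) * (n : ℝ) ^ 2)) = Real.sqrt 2 * x := by
    rw [Real.tsum_exp_neg_mul_int_sq (by norm_num : (0 : ℝ) < 1 / 2)]
    congr 1
    · rw [← Real.sqrt_eq_rpow]
      rw [show (1 / 2 : ℝ) = 2⁻¹ by norm_num, Real.sqrt_inv, one_div, inv_inv]
    · rw [hx]
      refine tsum_congr fun n => ?_
      congr 1; ring
  -- basic positivity
  have hx0 : 0 < x := by
    rw [hx]; exact Summable.tsum_pos sx (fun n => (Real.exp_pos _).le) 0 (Real.exp_pos _)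
  have ha0 : 0 < a := by
    rw [ha]; exact Summable.tsum_pos sa (fun n => (Real.exp_pos _).le) 0 (Real.exp_pos _)
  have hs2 : Real.sqrt 2 * Real.sqrt 2 = 2 := Real.mul_self_sqrt (by norm_num)
  have h12 : 1 < Real.sqrt 2 := by
    nlinarith [Real.sqrt_nonneg 2]
  have hc_eq : c = (Real.sqrt 2 - 1) * x := by
    have := hsplit.symm.trans hpoisson
    linarith
  -- the quadratic relations
  have ha2 : a * a = (4 - 2 * Real.sqrt 2) * (x * x) := by
    rw [h1, hc_eq]; linear_combination (x * x) * hs2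
  have hb2 : b * b = (2 * Real.sqrt 2 - 2) * (x * x) := by
    rw [h2, hc_eq]; linear_combination (-(x * x)) * hs2
  have hb2pos : 0 < b * b := by
    rw [hb2]; nlinarith [mul_pos hx0 hx0]
  have hab : 0 ≤ a * b := by
    rw [h3, hD0]; nlinarith [mul_self_nonneg B]
  have hb0 : 0 < b := by
    rcases lt_trichotomy b 0 with h | h | h
    · nlinarith
    · rw [h] at hb2pos; simp at hb2pos
    · exact h
  -- conclusion
  have ht0 : (0 : ℝ) < (2 : ℝ) ^ ((1 : ℝ) / 4) := Real.rpow_pos_of_pos (by norm_num) _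
  have ht2 : ((2 : ℝ) ^ ((1 : ℝ) / 4)) ^ 2 = Real.sqrt 2 := by
    rw [← Real.rpow_natCast ((2 : ℝ) ^ ((1 : ℝ) / 4)) 2,
      ← Real.rpow_mul (by norm_num : (0 : ℝ) ≤ 2), Real.sqrt_eq_rpow]
    norm_num
  have htt : ((2 : ℝ) ^ ((1 : ℝ) / 4)) * ((2 : ℝ) ^ ((1 : ℝ) / 4)) = Real.sqrt 2 := by
    rw [← ht2, sq]
  have hfinal : a * a = ((2 : ℝ) ^ ((1 : ℝ) / 4) * b) * ((2 : ℝ) ^ ((1 : ℝ) / 4) * b) :=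
    calc a * a = (4 - 2 * Real.sqrt 2) * (x * x) := ha2
      _ = Real.sqrt 2 * ((2 * Real.sqrt 2 - 2) * (x * x)) := by
          linear_combination (-2 * (x * x)) * hs2
      _ = Real.sqrt 2 * (b * b) := by rw [hb2]
      _ = ((2 : ℝ) ^ ((1 : ℝ) / 4) * b) * ((2 : ℝ) ^ ((1 : ℝ) / 4) * b) := by
          rw [← htt]; ring
  refine (sq_eq_sq₀ ha0.le (by positivity)).mp ?_
  rw [sq, sq]
  exact hfinal
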